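/- Let Ω ⊂ ℝ^n be bounded, smooth, with 0 ∈ Ω, and let G_{Ω,0}(y) = −ω_{n-1}^{−1/(n-1)} log|y| − H(y) be the n-Green's function with H continuous on the closure of Ω. Let I_Ω(0) = e^{−ω_{n-1}^{1/(n-1)} H(0)} be the conformal incenter. Then lim_{t→∞} n·|{G_{Ω,0} > t}| / (ω_{n-1} e^{−n ω_{n-1}^{1/(n-1)} t}) = I_Ω(0)^n. -/
import Mathlib


open MeasureTheory Metric Set Filter
open scoped RealInnerProductSpace ENNReal Topology NNReal

noncomputable section

abbrev E (n : ℕ) := EuclideanSpace ℝ (Fin n)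

/-- ω_{n-1}, the H^{n-1} measure of the unit sphere, equals n times the volume of the unit ball. -/
def sphereVol (n : ℕ) : ℝ := n * (volume (Metric.ball (0 : E n) 1)).toReal

/-- `G` is the n-Green's function of `Ω` with singularity at `x`: it vanishes on the boundary,
is nonnegative, and satisfies ∫_Ω |∇G|^{n-2}⟨∇G,∇φ⟩ = φ(x) for all test functions φ. -/
def IsGreen (n : ℕ) (Ω : Set (E n)) (x : E n) (G : E n → ℝ) : Prop :=
  (∀ y ∈ frontier Ω, G y = 0) ∧ (∀ y ∈ Ω, 0 ≤ G y) ∧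
    ∀ φ : E n → ℝ, ContDiff ℝ 1 φ → tsupport φ ⊆ Ω →
      (∫ y in Ω, ‖gradient G y‖ ^ ((n : ℝ) - 2) * ⟪gradient G y, gradient φ y⟫) = φ x

/-- Asymptotics of the superlevel sets of the n-Green's function:
n·|{G > t}| / (ω_{n-1} e^{-n ω^{1/(n-1)} t}) → I_Ω(0)^n as t → ∞, where
I_Ω(0) = e^{-ω^{1/(n-1)} H(0)} is the conformal incenter. -/
theorem stmt6 (n : ℕ) (hn : 2 ≤ n) (Ω : Set (E n)) (hΩ : IsOpen Ω)
    (hb : Bornology.IsBounded Ω) (h0 : (0 : E n) ∈ Ω)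
    (G H : E n → ℝ) (hG : IsGreen n Ω 0 G)
    (hH : ContinuousOn H (closure Ω))
    (hdec : ∀ y ∈ Ω, y ≠ 0 →
      G y = -(sphereVol n ^ (1 / ((n : ℝ) - 1)))⁻¹ * Real.log ‖y‖ - H y) :
    Tendsto (fun t : ℝ => (n : ℝ) * (volume {y ∈ Ω | t < G y}).toReal /
        (sphereVol n * Real.exp (-(n : ℝ) * sphereVol n ^ (1 / ((n : ℝ) - 1)) * t))) atTop
      (𝓝 (Real.exp (-(sphereVol n ^ (1 / ((n : ℝ) - 1))) * H 0) ^ (n : ℝ))) := by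
  clear hG
  have hn0 : (0:ℝ) < (n:ℝ) := by
    have : 0 < n := by omega
    exact_mod_cast this
  haveI : Nontrivial (E n) :=
    Module.nontrivial_of_finrank_pos (R := ℝ) (by rw [finrank_euclideanSpace_fin]; omega)
  set B : ℝ := (volume (Metric.ball (0 : E n) 1)).toReal with hBdef
  have hBpos : 0 < B :=
    ENNReal.toReal_pos (measure_ball_pos volume 0 one_pos).ne' measure_ball_lt_top.ne
  have hsv : sphereVol n = n * B := rfl
  have hsvpos : 0 < sphereVol n := by rw [hsv]; positivity
  set c : ℝ := sphereVol n ^ (1 / ((n : ℝ) - 1)) with hcdef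
  have hcpos : 0 < c := Real.rpow_pos_of_pos hsvpos _
  set L : ℝ := Real.exp ((n:ℝ) * (-c * H 0)) with hLdef
  have hLpos : 0 < L := Real.exp_pos _
  have hgoalL : Real.exp (-c * H 0) ^ (n : ℝ) = L := by
    rw [Real.rpow_natCast, ← Real.exp_nat_mul]
  rw [hgoalL]
  -- bound for H on closure Ω
  obtain ⟨M, hM⟩ :=
    (Metric.isCompact_of_isClosed_isBounded isClosed_closure hb.closure).exists_bound_of_continuousOn hH
  -- continuity of H at 0
  have hcont : ContinuousAt H 0 :=
    hH.continuousAt (mem_of_superset (hΩ.mem_nhds h0) subset_closure)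
  -- ball volume formula
  have hvol : ∀ r : ℝ, 0 < r → (volume (Metric.ball (0 : E n) r)).toReal = r ^ n * B := by
    intro r hr
    rw [Measure.addHaar_ball_of_pos volume (0 : E n) hr, finrank_euclideanSpace_fin,
      ENNReal.toReal_mul, ENNReal.toReal_ofReal (by positivity)]
  have key : ∀ ε : ℝ, 0 < ε → ∀ᶠ t in atTop,
      L * Real.exp (-ε) ≤ (n : ℝ) * (volume {y ∈ Ω | t < G y}).toReal /
          (sphereVol n * Real.exp (-(n : ℝ) * c * t)) ∧
        (n : ℝ) * (volume {y ∈ Ω | t < G y}).toReal /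
          (sphereVol n * Real.exp (-(n : ℝ) * c * t)) ≤ L * Real.exp ε := by
    intro ε hε
    set ε' : ℝ := ε / (n * c) with hε'def
    have hε'pos : 0 < ε' := by positivity
    obtain ⟨δ₁, hδ₁, hδball⟩ := Metric.mem_nhds_iff.1 (hΩ.mem_nhds h0)
    obtain ⟨δ₂, hδ₂, hδH⟩ := Metric.continuousAt_iff.1 hcont ε' hε'pos
    set δ : ℝ := min δ₁ δ₂ with hδdef
    have hδpos : 0 < δ := lt_min hδ₁ hδ₂
    -- eventual conditions on t
    have hct : Tendsto (fun t : ℝ => c * t) atTop atTop := Tendsto.const_mul_atTop hcpos tendsto_id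
    have hnegct : Tendsto (fun t : ℝ => -(c * t)) atTop atBot := tendsto_neg_atTop_atBot.comp hct
    have h1 : Tendsto (fun t : ℝ => c * M - c * t) atTop atBot := by
      simpa [sub_eq_add_neg] using tendsto_atBot_add_const_left atTop (c * M) hnegct
    have h2 : Tendsto (fun t : ℝ => -c * (t + H 0 + ε')) atTop atBot := by
      have := tendsto_atBot_add_const_right atTop (-(c * (H 0 + ε'))) hnegct
      refine this.congr fun t => by ring
    filter_upwards [h1.eventually_lt_atBot (Real.log δ),
      h2.eventually_lt_atBot (Real.log δ)] with t ht1 ht2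
    set rP : ℝ := Real.exp (-c * (t + H 0 - ε')) with hrP
    set rM : ℝ := Real.exp (-c * (t + H 0 + ε')) with hrM
    -- upper inclusion
    have hsubU : {y ∈ Ω | t < G y} ⊆ Metric.ball (0 : E n) rP := by
      rintro y ⟨hyΩ, hyG⟩
      rw [mem_ball_zero_iff]
      rcases eq_or_ne y 0 with rfl | hy0
      · simpa using Real.exp_pos _
      · have hnorm : 0 < ‖y‖ := norm_pos_iff.2 hy0
        rw [hdec y hyΩ hy0] at hyG
        have hstep : c * (t + H y) < -Real.log ‖y‖ := by
          have h1' : t + H y < c⁻¹ * (-Real.log ‖y‖) := by linarith [hyG]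
          have h2' := (mul_lt_mul_iff_right₀ hcpos).2 h1'
          have h3' : c * (c⁻¹ * (-Real.log ‖y‖)) = -Real.log ‖y‖ := by
            rw [mul_neg, mul_neg, ← mul_assoc, mul_inv_cancel₀ hcpos.ne', one_mul]
          linarith [h2', h3'.le, h3'.ge]
        have hMy : |H y| ≤ M := by
          have := hM y (subset_closure hyΩ)
          rwa [Real.norm_eq_abs] at this
        obtain ⟨hMy1, hMy2⟩ := abs_le.1 hMy
        have hyδ : ‖y‖ < δ := by
          have hlogy : Real.log ‖y‖ < Real.log δ := by
            have hprod : c * (-M) ≤ c * H y := mul_le_mul_of_nonneg_left hMy1 hcpos.le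
            linarith [hstep, ht1, hprod]
          calc ‖y‖ = Real.exp (Real.log ‖y‖) := (Real.exp_log hnorm).symm
            _ < Real.exp (Real.log δ) := Real.exp_lt_exp.2 hlogy
            _ = δ := Real.exp_log hδpos
        have hHy : H 0 - ε' < H y := by
          have hd := hδH (show dist y 0 < δ₂ by
            rw [dist_zero_right]; exact hyδ.trans_le (min_le_right _ _))
          rw [Real.dist_eq] at hd
          have := abs_lt.1 hd
          linarith [this.1]
        have : Real.log ‖y‖ < -c * (t + H 0 - ε') := by
          have hprod : c * (H 0 - ε') < c * H y := mul_lt_mul_of_pos_left hHy hcpos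
          linarith [hstep, hprod]
        exact (Real.log_lt_iff_lt_exp hnorm).1 this
    -- lower inclusion
    have hsubL : Metric.ball (0 : E n) rM \ {0} ⊆ {y ∈ Ω | t < G y} := by
      rintro y ⟨hyb, hy0⟩
      have hy0' : y ≠ 0 := by simpa using hy0
      rw [mem_ball_zero_iff] at hyb
      have hrδ : rM < δ := by
        calc rM < Real.exp (Real.log δ) := Real.exp_lt_exp.2 ht2
          _ = δ := Real.exp_log hδpos
      have hyδ : ‖y‖ < δ := hyb.trans hrδ
      have hyΩ : y ∈ Ω := hδball (mem_ball_zero_iff.2 (hyδ.trans_le (min_le_left _ _)))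
      have hHy : H y < H 0 + ε' := by
        have hd := hδH (show dist y 0 < δ₂ by
          rw [dist_zero_right]; exact hyδ.trans_le (min_le_right _ _))
        rw [Real.dist_eq] at hd
        have := abs_lt.1 hd
        linarith [this.2]
      have hnorm : 0 < ‖y‖ := norm_pos_iff.2 hy0'
      have hlog : Real.log ‖y‖ < -c * (t + H y) := by
        have h1' : Real.log ‖y‖ < -c * (t + H 0 + ε') := (Real.log_lt_iff_lt_exp hnorm).2 hyb
        have hprod : c * H y < c * (H 0 + ε') := mul_lt_mul_of_pos_left hHy hcpos
        linarith [h1', hprod]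
      refine ⟨hyΩ, ?_⟩
      rw [hdec y hyΩ hy0']
      have h2' := (mul_lt_mul_iff_right₀ (inv_pos.2 hcpos)).2 hlog
      have h3' : c⁻¹ * (-c * (t + H y)) = -(t + H y) := by
        rw [neg_mul, mul_neg, ← mul_assoc, inv_mul_cancel₀ hcpos.ne', one_mul]
      linarith [h2', h3'.le, h3'.ge]
    -- волume bounds
    have hrPpos : 0 < rP := Real.exp_pos _
    have hrMpos : 0 < rM := Real.exp_pos _
    set V : ℝ := (volume {y ∈ Ω | t < G y}).toReal with hVdef
    have hup : V ≤ rP ^ n * B := by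
      rw [← hvol rP hrPpos]
      exact ENNReal.toReal_mono measure_ball_lt_top.ne (measure_mono hsubU)
    have hlow : rM ^ n * B ≤ V := by
      rw [← hvol rM hrMpos]
      refine ENNReal.toReal_mono ((measure_mono hsubU).trans_lt measure_ball_lt_top).ne ?_
      calc volume (Metric.ball (0 : E n) rM)
          = volume (Metric.ball (0 : E n) rM \ {0}) := (measure_diff_null (measure_singleton _)).symm
        _ ≤ volume {y ∈ Ω | t < G y} := measure_mono hsubL
    have hD : 0 < sphereVol n * Real.exp (-(n : ℝ) * c * t) := by positivity
    have hnc : (n : ℝ) * c ≠ 0 := by positivity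
    have hexpsU : Real.exp ((n:ℝ) * (-c * (t + H 0 - ε'))) =
        L * Real.exp ε * Real.exp (-(n : ℝ) * c * t) := by
      rw [hLdef, ← Real.exp_add, ← Real.exp_add, Real.exp_eq_exp, hε'def]
      field_simp
      ring
    have hexpsL : Real.exp ((n:ℝ) * (-c * (t + H 0 + ε'))) =
        L * Real.exp (-ε) * Real.exp (-(n : ℝ) * c * t) := by
      rw [hLdef, ← Real.exp_add, ← Real.exp_add, Real.exp_eq_exp, hε'def]
      field_simp
      ring
    have hexpU : (n : ℝ) * (rP ^ n * B) =
        L * Real.exp ε * (sphereVol n * Real.exp (-(n : ℝ) * c * t)) := by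
      rw [hsv, hrP, ← Real.exp_nat_mul, hexpsU]; ring
    have hexpL : (n : ℝ) * (rM ^ n * B) =
        L * Real.exp (-ε) * (sphereVol n * Real.exp (-(n : ℝ) * c * t)) := by
      rw [hsv, hrM, ← Real.exp_nat_mul, hexpsL]; ring
    constructor
    · rw [le_div_iff₀ hD, ← hexpL]
      exact mul_le_mul_of_nonneg_left hlow hn0.le
    · rw [div_le_iff₀ hD, ← hexpU]
      exact mul_le_mul_of_nonneg_left hup hn0.le
  -- conclude by order squeeze
  refine tendsto_order.2 ⟨?_, ?_⟩
  · intro a ha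
    have hc1 : Tendsto (fun s : ℝ => L * Real.exp (-s)) (𝓝[>] (0:ℝ)) (𝓝 L) := by
      have hcont' : Continuous fun s : ℝ => L * Real.exp (-s) :=
        continuous_const.mul (Real.continuous_exp.comp continuous_neg)
      have h : Tendsto (fun s : ℝ => L * Real.exp (-s)) (𝓝[>] (0:ℝ))
          (𝓝 (L * Real.exp (-(0:ℝ)))) := (hcont'.tendsto 0).mono_left nhdsWithin_le_nhds
      simpa using h
    obtain ⟨ε, hε1, hε2⟩ := ((hc1.eventually (eventually_gt_nhds ha)).and
      self_mem_nhdsWithin).exists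
    filter_upwards [key ε hε2] with t ht
    exact hε1.trans_le ht.1
  · intro b hb'
    have hc1 : Tendsto (fun s : ℝ => L * Real.exp s) (𝓝[>] (0:ℝ)) (𝓝 L) := by
      have hcont' : Continuous fun s : ℝ => L * Real.exp s :=
        continuous_const.mul Real.continuous_exp
      have h : Tendsto (fun s : ℝ => L * Real.exp s) (𝓝[>] (0:ℝ))
          (𝓝 (L * Real.exp (0:ℝ))) := (hcont'.tendsto 0).mono_left nhdsWithin_le_nhds
      simpa using h
    obtain ⟨ε, hε1, hε2⟩ := ((hc1.eventually (eventually_lt_nhds hb')).and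
      self_mem_nhdsWithin).exists
    filter_upwards [key ε hε2] with t ht
    exact ht.2.trans_lt hε1
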